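/- Let X be a Hausdorff space and x, y ∈ X. Give the set P(X)(x,y) of paths from x to y and its subset R(X)(x,y) of regular paths from x to y the compact-open topology; let T_R(X)(x,y) be the quotient of R(X)(x,y) by the equivalence relation identifying p with p ∘ ρ for increasing self-homeomorphisms ρ of I, and let T(X)(x,y) be the quotient of P(X)(x,y) by reparametrization equivalence, both with the quotient topology. Then the map T_R(X)(x,y) → T(X)(x,y) induced by the inclusion R(X)(x,y) ↪ P(X)(x,y) is a homeomorphism. -/

import Mathlib

open unitInterval

/-- `φ` is a reparametrization of the unit interval: a continuous weakly
increasing self-map of `I` with `φ 0 = 0` and `φ 1 = 1` (such a map is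
automatically surjective). -/
def IsRepar (φ : I → I) : Prop :=
  Continuous φ ∧ Monotone φ ∧ φ 0 = 0 ∧ φ 1 = 1

/-- `p` is constant on the closed subinterval `[a, b]` of `I`. -/
def ConstOn {X : Type*} (p : I → X) (a b : I) : Prop :=
  ∀ s ∈ Set.Icc a b, ∀ t ∈ Set.Icc a b, p s = p t


/-- A path `p : I → X` is regular if it is constant on no nondegenerate
closed subinterval of `I`, unless it is constant on all of `I`. -/
def IsRegularPath {X : Type*} (p : I → X) : Prop :=
  (∀ s t : I, p s = p t) ∨ ∀ a b : I, a < b → ¬ ConstOn p a b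

/-- Two paths `p, q : I → X` are reparametrization equivalent if
`p ∘ φ = q ∘ ψ` for some reparametrizations `φ, ψ` of `I`. -/
def ReparEquiv {X : Type*} (p q : I → X) : Prop :=
  ∃ φ ψ : I → I, IsRepar φ ∧ IsRepar ψ ∧ p ∘ φ = q ∘ ψ

/-- The space `P(X)(x,y)` of paths from `x` to `y`, with the compact-open
topology. -/
abbrev PathXY (X : Type*) [TopologicalSpace X] (x y : X) : Type _ :=
  {f : C(I, X) // f 0 = x ∧ f 1 = y}

/-- The subspace `R(X)(x,y)` of regular paths from `x` to `y`. -/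
abbrev RegXY (X : Type*) [TopologicalSpace X] (x y : X) : Type _ :=
  {f : C(I, X) // (f 0 = x ∧ f 1 = y) ∧ IsRegularPath f}

/-- The relation on regular paths identifying `p` with `p ∘ ρ` for
increasing self-homeomorphisms `ρ` of `I`; its quotient is `T_R(X)(x,y)`. -/
def HomeoRel {X : Type*} [TopologicalSpace X] {x y : X}
    (p q : RegXY X x y) : Prop :=
  ∃ ρ : I → I, IsRepar ρ ∧ StrictMono ρ ∧ ∀ t : I, q.1 t = p.1 (ρ t)

/-- Reparametrization equivalence on `P(X)(x,y)`; its quotient is the trace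
space `T(X)(x,y)`. -/
def TraceRel {X : Type*} [TopologicalSpace X] {x y : X}
    (p q : PathXY X x y) : Prop :=
  ReparEquiv (p.1 : I → X) (q.1 : I → X)

open Set Topology

set_option linter.unusedSectionVars false

namespace FR

/-- IVT on the unit interval. -/
lemma ivt (f : I → I) (hf : Continuous f) {a b : I} (hab : a ≤ b) {v : I} (hv : f a ≤ v)
    (hv' : v ≤ f b) : ∃ τ, a ≤ τ ∧ τ ≤ b ∧ f τ = v := by
  set g : ℝ → ℝ := fun τ => (f (Set.projIcc 0 1 zero_le_one τ) : ℝ) with hg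
  have hgc : Continuous g := continuous_subtype_val.comp (hf.comp continuous_projIcc)
  have h1 : (v:ℝ) ∈ Set.Icc (g a) (g b) := by
    simp only [hg, Set.projIcc_val]
    exact ⟨Subtype.coe_le_coe.2 hv, Subtype.coe_le_coe.2 hv'⟩
  obtain ⟨τ, hτ, hτv⟩ := intermediate_value_Icc (Subtype.coe_le_coe.2 hab) hgc.continuousOn h1
  have hτI : τ ∈ I := ⟨le_trans a.2.1 hτ.1, le_trans hτ.2 b.2.2⟩
  refine ⟨⟨τ, hτI⟩, Subtype.coe_le_coe.1 hτ.1, Subtype.coe_le_coe.1 hτ.2, ?_⟩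
  apply Subtype.ext
  rw [← hτv, hg]
  exact congrArg _ (congrArg f (by rw [Set.projIcc_of_mem zero_le_one hτI]))

lemma isRepar_id : IsRepar (id : I → I) :=
  ⟨continuous_id, monotone_id, rfl, rfl⟩

lemma repar_comp {φ ψ : I → I} (hφ : IsRepar φ) (hψ : IsRepar ψ) : IsRepar (φ ∘ ψ) :=
  ⟨hφ.1.comp hψ.1, hφ.2.1.comp hψ.2.1, by simp [Function.comp, hψ.2.2.1, hφ.2.2.1],
    by simp [Function.comp, hψ.2.2.2, hφ.2.2.2]⟩

lemma repar_surj {φ : I → I} (hφ : IsRepar φ) : Function.Surjective φ := by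
  intro v
  obtain ⟨τ, _, _, hτ⟩ := ivt φ hφ.1 (le_of_lt (by norm_num : (0:I) < 1))
    (v := v) (by rw [hφ.2.2.1]; exact unitInterval.nonneg')
    (by rw [hφ.2.2.2]; exact unitInterval.le_one')
  exact ⟨τ, hτ⟩

/-- order triviality used for transitivity of the constancy relation -/
lemma mem_cases {α : Type*} [LinearOrder α] {a b c u : α} (h1 : a ⊓ c ≤ u) (h2 : u ≤ a ⊔ c) :
    (a ⊓ b ≤ u ∧ u ≤ a ⊔ b) ∨ (b ⊓ c ≤ u ∧ u ≤ b ⊔ c) := by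
  rcases le_total u b with hub | hbu
  · rcases le_total a u with hau | hua
    · exact Or.inl ⟨le_trans inf_le_left hau, le_trans hub le_sup_right⟩
    · rcases le_total c u with hcu | huc
      · exact Or.inr ⟨le_trans inf_le_right hcu, le_trans hub le_sup_left⟩
      · have hu : u = a ⊓ c := le_antisymm (le_inf hua huc) h1
        rcases le_total a c with hac | hca
        · exact Or.inl ⟨by rw [hu, inf_eq_left.2 hac]; exact inf_le_left,
            by rw [hu, inf_eq_left.2 hac]; exact le_sup_left⟩
        · exact Or.inr ⟨by rw [hu, inf_eq_right.2 hca]; exact inf_le_right,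
            by rw [hu, inf_eq_right.2 hca]; exact le_sup_right⟩
  · rcases le_total u a with hua | hau
    · exact Or.inl ⟨le_trans inf_le_right hbu, le_trans hua le_sup_left⟩
    · rcases le_total u c with huc | hcu
      · exact Or.inr ⟨le_trans inf_le_left hbu, le_trans huc le_sup_right⟩
      · have hu : u = a ⊔ c := le_antisymm h2 (sup_le hau hcu)
        rcases le_total a c with hac | hca
        · exact Or.inr ⟨by rw [hu, sup_eq_right.2 hac]; exact inf_le_right,
            by rw [hu, sup_eq_right.2 hac]; exact le_sup_right⟩
        · exact Or.inl ⟨by rw [hu, sup_eq_left.2 hca]; exact inf_le_left,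
            by rw [hu, sup_eq_left.2 hca]; exact le_sup_left⟩

section Rel

variable {X : Type*} [TopologicalSpace X]

/-- the "same constancy class" relation -/
def Rel (p : I → X) (a b : I) : Prop := ConstOn p (a ⊓ b) (a ⊔ b)

variable {p : I → X}

lemma rel_refl (a : I) : Rel p a a := by
  intro s hs t ht
  simp only [inf_idem, sup_idem, Set.Icc_self, Set.mem_singleton_iff] at hs ht
  rw [hs, ht]

lemma Rel.symm {a b : I} (h : Rel p a b) : Rel p b a := by
  unfold Rel ConstOn at *; rwa [inf_comm, sup_comm]

lemma mem_left {a b : I} : a ∈ Set.Icc (a ⊓ b) (a ⊔ b) := ⟨inf_le_left, le_sup_left⟩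
lemma mem_right {a b : I} : b ∈ Set.Icc (a ⊓ b) (a ⊔ b) := ⟨inf_le_right, le_sup_right⟩

lemma Rel.eq {a b : I} (h : Rel p a b) : p a = p b :=
  h a mem_left b mem_right

lemma Rel.trans {a b c : I} (hab : Rel p a b) (hbc : Rel p b c) : Rel p a c := by
  have key : ∀ u ∈ Set.Icc (a ⊓ c) (a ⊔ c), p u = p b := by
    intro u hu
    rcases mem_cases (b := b) hu.1 hu.2 with h | h
    · exact hab u ⟨h.1, h.2⟩ b mem_right
    · exact hbc u ⟨h.1, h.2⟩ b mem_left
  intro s hs t ht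
  rw [key s hs, key t ht]

/-- a Rel with endpoints in increasing position restricts -/
lemma rel_of_between {a b c : I} (h : Rel p a b) (hc : c ∈ Set.Icc (a ⊓ b) (a ⊔ b)) :
    Rel p a c := by
  intro s hs t ht
  have hsub : Set.Icc (a ⊓ c) (a ⊔ c) ⊆ Set.Icc (a ⊓ b) (a ⊔ b) :=
    Set.Icc_subset_Icc (le_inf inf_le_left hc.1) (sup_le le_sup_left hc.2)
  exact h s (hsub hs) t (hsub ht)

lemma rel_of_mem_Icc {a b c d : I} (h : Rel p a b) (hc : c ∈ Set.Icc (a ⊓ b) (a ⊔ b))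
    (hd : d ∈ Set.Icc (a ⊓ b) (a ⊔ b)) : Rel p c d :=
  ((rel_of_between h hc).symm.trans (rel_of_between h hd))


end Rel

section Closed
variable {X : Type*} [TopologicalSpace X] [T2Space X] {p : I → X} (hp : Continuous p)

lemma isClosed_rel (hp : Continuous p) (t : I) : IsClosed {s : I | Rel p t s} := by
  apply IsSeqClosed.isClosed
  intro u s hu hus
  have key : ∀ w : I, t ⊓ s ≤ w → w ≤ t ⊔ s → p w = p t := by
    intro w h1 h2
    by_cases hws : w = s
    · subst hws
      have h3 : Filter.Tendsto (p ∘ u) Filter.atTop (𝓝 (p w)) := (hp.tendsto w).comp hus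
      have h4 : (p ∘ u) = fun _ => p t := by
        funext n
        exact ((hu n) (u n) mem_right t mem_left)
      rw [h4] at h3
      exact tendsto_nhds_unique h3 tendsto_const_nhds
    · rcases lt_or_gt_of_ne hws with hlt | hgt
      · obtain ⟨n, hn⟩ := (hus.eventually (eventually_gt_nhds hlt)).exists
        have hlow : t ⊓ u n ≤ w := by
          rcases le_total t w with h | h
          · exact le_trans inf_le_left h
          · rcases le_total t s with hts | hst
            · exact le_trans inf_le_left (by rwa [inf_eq_left.2 hts] at h1)
            · exact absurd hlt (not_lt.2 (by rwa [inf_eq_right.2 hst] at h1))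
        exact (hu n) w ⟨hlow, le_trans (le_of_lt hn) le_sup_right⟩ t mem_left
      · obtain ⟨n, hn⟩ := (hus.eventually (eventually_lt_nhds hgt)).exists
        have hhigh : w ≤ t ⊔ u n := by
          rcases le_total w t with h | h
          · exact le_trans h le_sup_left
          · rcases le_total t s with hts | hst
            · exact absurd hgt (not_lt.2 (by rwa [sup_eq_right.2 hts] at h2))
            · exact le_trans (by rwa [sup_eq_left.2 hst] at h2) le_sup_left
        exact (hu n) w ⟨le_trans inf_le_right (le_of_lt hn), hhigh⟩ t mem_left
  intro s' hs' t' ht'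
  rw [key s' hs'.1 hs'.2, key t' ht'.1 ht'.2]

/-- the set of elements related to `t` -/
def cls (p : I → X) (t : I) : Set I := {s | Rel p t s}

lemma cls_eq {t s : I} (h : Rel p t s) : cls p t = cls p s := by
  ext u; exact ⟨fun hu => h.symm.trans hu, fun hu => h.trans hu⟩

lemma coe_cls_compact (hp : Continuous p) (t : I) : IsCompact ((↑) '' cls p t : Set ℝ) :=
  ((isClosed_rel hp t).isCompact).image continuous_subtype_val

omit [T2Space X] in
lemma cls_nonempty (t : I) : ((↑) '' cls p t : Set ℝ).Nonempty :=
  ⟨t, t, rel_refl t, rfl⟩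

/-- max of the constancy class -/
noncomputable def bI (hp : Continuous p) (t : I) : I :=
  ⟨sSup ((↑) '' cls p t), by
    obtain ⟨s, _, hs⟩ := (coe_cls_compact hp t).sSup_mem (cls_nonempty t)
    rw [← hs]; exact s.2⟩

/-- min of the constancy class -/
noncomputable def aI (hp : Continuous p) (t : I) : I :=
  ⟨sInf ((↑) '' cls p t), by
    obtain ⟨s, _, hs⟩ := (coe_cls_compact hp t).sInf_mem (cls_nonempty t)
    rw [← hs]; exact s.2⟩

lemma bI_mem (t : I) : Rel p t (bI hp t) := by
  obtain ⟨s, hs, hval⟩ := (coe_cls_compact hp t).sSup_mem (cls_nonempty t)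
  have : bI hp t = s := Subtype.ext hval.symm
  rw [this]; exact hs

lemma aI_mem (t : I) : Rel p t (aI hp t) := by
  obtain ⟨s, hs, hval⟩ := (coe_cls_compact hp t).sInf_mem (cls_nonempty t)
  have : aI hp t = s := Subtype.ext hval.symm
  rw [this]; exact hs

lemma le_bI {t s : I} (h : Rel p t s) : s ≤ bI hp t :=
  Subtype.coe_le_coe.1 (le_csSup ⟨1, fun x ⟨w, _, hw⟩ => by rw [← hw]; exact w.2.2⟩
    ⟨s, h, rfl⟩)

lemma aI_le {t s : I} (h : Rel p t s) : aI hp t ≤ s :=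
  Subtype.coe_le_coe.1 (csInf_le ⟨0, fun x ⟨w, _, hw⟩ => by rw [← hw]; exact w.2.1⟩
    ⟨s, h, rfl⟩)

lemma bI_eq {t s : I} (h : Rel p t s) : bI hp t = bI hp s :=
  Subtype.ext (by show sSup _ = sSup _; rw [cls_eq h])

lemma aI_eq {t s : I} (h : Rel p t s) : aI hp t = aI hp s :=
  Subtype.ext (by show sInf _ = sInf _; rw [cls_eq h])

lemma self_le_bI (t : I) : t ≤ bI hp t := le_bI hp (rel_refl t)
lemma aI_le_self (t : I) : aI hp t ≤ t := aI_le hp (rel_refl t)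

lemma lt_of_not_rel {t s a b : I} (hns : ¬ Rel p t s) (hts : t ≤ s) (hta : Rel p t a)
    (hsb : Rel p s b) : a < b := by
  by_contra hba
  push_neg at hba
  rcases le_total s a with hsa | has
  · exact hns (rel_of_between hta ⟨le_trans inf_le_left hts, le_trans hsa le_sup_right⟩)
  · exact hns (hta.trans
      (rel_of_between hsb ⟨le_trans inf_le_right hba, le_trans has le_sup_left⟩).symm)

lemma bI_lt_aI {t s : I} (hns : ¬ Rel p t s) (hts : t ≤ s) : bI hp t < aI hp s :=
  lt_of_not_rel hns hts (bI_mem hp t) (aI_mem hp s)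

lemma bI_mono : Monotone (bI hp) := by
  intro t s hts
  by_cases h : Rel p t s
  · exact le_of_eq (bI_eq hp h)
  · exact le_trans (le_of_lt (bI_lt_aI hp h hts)) (le_trans (aI_le_self hp s) (self_le_bI hp s))

/-- rationals separate distinct constancy classes -/
lemma exists_rat_rep {t s : I} (hns : ¬ Rel p t s) (hts : t ≤ s) :
    ∃ r : I, (∃ q : ℚ, (q:ℝ) = (r:ℝ)) ∧ ¬ Rel p r t ∧ ¬ Rel p r s ∧
      bI hp t < bI hp r ∧ bI hp r < aI hp s := by
  obtain ⟨q, hq1, hq2⟩ := exists_rat_btwn (Subtype.coe_lt_coe.2 (bI_lt_aI hp hns hts))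
  have hqI : (q:ℝ) ∈ I :=
    ⟨le_trans (bI hp t).2.1 (le_of_lt hq1), le_trans (le_of_lt hq2) (aI hp s).2.2⟩
  set r : I := ⟨q, hqI⟩ with hr
  have hrt : ¬ Rel p r t := fun h => absurd (Subtype.coe_le_coe.2 (le_bI hp h.symm)) (not_le.2 hq1)
  have hrs : ¬ Rel p r s := fun h => absurd (Subtype.coe_le_coe.2 (aI_le hp h.symm)) (not_le.2 hq2)
  have htr : t ≤ r := le_trans (self_le_bI hp t) (Subtype.coe_le_coe.1 hq1.le)
  have hrls : r ≤ s := le_trans (Subtype.coe_le_coe.1 hq2.le) (aI_le_self hp s)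
  exact ⟨r, ⟨q, rfl⟩, hrt, hrs,
    lt_of_not_rel (fun h => hrt h.symm) htr (bI_mem hp t) (bI_mem hp r),
    lt_of_not_rel hrs hrls (bI_mem hp r) (aI_mem hp s)⟩

end Closed

section Regularize
variable {X : Type*} [TopologicalSpace X] [T2Space X]

theorem exists_reg (p : C(I, X)) :
    ∃ (q : C(I, X)) (φ : I → I), IsRepar φ ∧ IsRegularPath ⇑q ∧ ∀ t, p t = q (φ t) := by
  classical
  by_cases hconst : ∀ s t : I, p s = p t
  · exact ⟨p, id, isRepar_id, Or.inl hconst, fun t => rfl⟩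
  have hp : Continuous ⇑p := p.continuous
  have hnc : ¬ Rel ⇑p 0 1 := by
    intro h
    apply hconst
    intro s t
    have hm : ∀ w : I, w ∈ Set.Icc ((0:I) ⊓ 1) ((0:I) ⊔ 1) := fun w =>
      ⟨le_trans inf_le_left nonneg', le_trans le_one' le_sup_right⟩
    exact h s (hm s) t (hm t)
  -- countable family of class representatives
  set E : Set I := {e | (∃ d : I, (∃ qq : ℚ, (qq:ℝ) = (d:ℝ)) ∧ bI hp d = e) ∧
      ¬ Rel ⇑p e 0 ∧ ¬ Rel ⇑p e 1} with hE
  have hEfix : ∀ e ∈ E, bI hp e = e := by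
    rintro e ⟨⟨d, _, hd⟩, _, _⟩
    rw [← hd]
    exact (bI_eq hp (bI_mem hp d)).symm
  have hbtwn : ∀ t s : I, ¬ Rel ⇑p t s → t ≤ s → ∃ e ∈ E, bI hp t < e ∧ e < aI hp s := by
    intro t s hns hts
    obtain ⟨r, hq, hrt, hrs, h1, h2⟩ := exists_rat_rep hp hns hts
    refine ⟨bI hp r, ⟨⟨r, hq, rfl⟩, ?_, ?_⟩, h1, h2⟩
    · intro h
      have h0 : bI hp r = bI hp 0 := bI_eq hp ((bI_mem hp r).trans h)
      by_cases h0t : Rel ⇑p 0 t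
      · have heq : bI hp r = bI hp t := h0.trans (bI_eq hp h0t)
        exact absurd h1 (not_lt.2 (le_of_eq heq))
      · have hlt := bI_lt_aI hp h0t nonneg'
        have hc : bI hp 0 < bI hp t :=
          lt_of_lt_of_le hlt ((aI_le_self hp t).trans (self_le_bI hp t))
        rw [h0] at h1
        exact absurd h1 (not_lt.2 hc.le)
    · intro h
      have h1' : bI hp r = bI hp 1 := bI_eq hp ((bI_mem hp r).trans h)
      have hlt : bI hp r < bI hp 1 :=
        lt_of_lt_of_le h2 ((aI_le_self hp s).trans (le_one'.trans (self_le_bI hp 1)))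
      exact absurd h1' (ne_of_lt hlt)
  have hEcnt : E.Countable := by
    have hsub : E ⊆ (fun d => bI hp d) '' {d : I | ∃ qq : ℚ, (qq:ℝ) = (d:ℝ)} := by
      rintro e ⟨⟨d, hq, hd⟩, _⟩
      exact ⟨d, hq, hd⟩
    refine Set.Countable.mono hsub (Set.Countable.image ?_ _)
    have hsub2 : {d : I | ∃ qq : ℚ, (qq:ℝ) = (d:ℝ)} ⊆
        Set.range (fun qq : ℚ => Set.projIcc (0:ℝ) 1 zero_le_one qq) := by
      rintro d ⟨qq, hq⟩
      refine ⟨qq, ?_⟩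
      have hmem : (qq:ℝ) ∈ Set.Icc (0:ℝ) 1 := hq ▸ d.2
      show Set.projIcc (0:ℝ) 1 zero_le_one (qq:ℝ) = d
      rw [Set.projIcc_of_mem zero_le_one hmem]
      exact Subtype.ext hq
    exact Set.Countable.mono hsub2 (Set.countable_range _)
  haveI : Countable ↥E := hEcnt.to_subtype
  haveI : DenselyOrdered ↥E := by
    constructor
    rintro ⟨a, ha⟩ ⟨b, hb⟩ hab
    have hab' : (a:I) < b := Subtype.mk_lt_mk.1 hab
    have hnr : ¬ Rel ⇑p a b := by
      intro h
      have : a = b := by rw [← hEfix a ha, ← hEfix b hb]; exact bI_eq hp h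
      exact absurd this (ne_of_lt hab')
    obtain ⟨e, heE, he1, he2⟩ := hbtwn a b hnr hab'.le
    refine ⟨⟨e, heE⟩, Subtype.mk_lt_mk.2 ?_, Subtype.mk_lt_mk.2 ?_⟩
    · calc a = bI hp a := (hEfix a ha).symm
        _ < e := he1
    · exact lt_of_lt_of_le he2 (aI_le_self hp b)
  haveI : NoMinOrder ↥E := by
    constructor
    rintro ⟨a, ha⟩
    have h0a : ¬ Rel ⇑p 0 a := fun h => ha.2.1 h.symm
    obtain ⟨e, heE, _, he2⟩ := hbtwn 0 a h0a nonneg'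
    exact ⟨⟨e, heE⟩, Subtype.mk_lt_mk.2 (lt_of_lt_of_le he2 (aI_le_self hp a))⟩
  haveI : NoMaxOrder ↥E := by
    constructor
    rintro ⟨a, ha⟩
    obtain ⟨e, heE, he1, _⟩ := hbtwn a 1 ha.2.2 le_one'
    refine ⟨⟨e, heE⟩, Subtype.mk_lt_mk.2 ?_⟩
    calc a = bI hp a := (hEfix a ha).symm
      _ < e := he1
  haveI : Nonempty ↥E := by
    obtain ⟨e, heE, _, _⟩ := hbtwn 0 1 hnc nonneg'
    exact ⟨⟨e, heE⟩⟩
  haveI : Nonempty ↥(Set.Ioo (0:ℚ) 1) := ⟨⟨1/2, by norm_num⟩⟩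
  obtain ⟨g⟩ := Order.iso_of_countable_dense ↥E ↥(Set.Ioo (0:ℚ) 1)
  set val : ↥E → ℝ := fun e => ((g e : ℚ) : ℝ) with hval
  have hvmono : StrictMono val := fun e1 e2 h => by simp only [hval]; exact_mod_cast g.strictMono h
  have hv0 : ∀ e, 0 < val e := fun e => by simp only [hval]; exact_mod_cast (g e).2.1
  have hv1 : ∀ e, val e < 1 := fun e => by simp only [hval]; exact_mod_cast (g e).2.2
  set φr : I → ℝ := fun t => sSup (insert (0:ℝ) (val '' {e : ↥E | (e:I) ≤ bI hp t})) with hφr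
  have hbdd : ∀ t : I, BddAbove (insert (0:ℝ) (val '' {e : ↥E | (e:I) ≤ bI hp t})) := by
    intro t
    refine ⟨1, ?_⟩
    rintro x (rfl | ⟨e, -, rfl⟩)
    · norm_num
    · exact (hv1 e).le
  have hne : ∀ t : I, (insert (0:ℝ) (val '' {e : ↥E | (e:I) ≤ bI hp t})).Nonempty :=
    fun t => ⟨0, Set.mem_insert _ _⟩
  have hφr01 : ∀ t, φr t ∈ Set.Icc (0:ℝ) 1 := by
    intro t
    constructor
    · exact le_csSup (hbdd t) (Set.mem_insert _ _)
    · refine csSup_le (hne t) ?_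
      rintro x (rfl | ⟨e, -, rfl⟩)
      · norm_num
      · exact (hv1 e).le
  have hφmono' : ∀ t s : I, t ≤ s → φr t ≤ φr s := by
    intro t s hts
    refine csSup_le_csSup (hbdd s) (hne t) (Set.insert_subset_insert ?_)
    refine Set.image_mono ?_
    intro e he
    exact le_trans he (bI_mono hp hts)
  have hφeq : ∀ t s : I, Rel ⇑p t s → φr t = φr s := by
    intro t s h
    simp only [hφr, bI_eq hp h]
  have hφlt : ∀ t s : I, ¬ Rel ⇑p t s → t ≤ s → φr t < φr s := by
    intro t s hns hts
    obtain ⟨e1m, he1E, h11, h12⟩ := hbtwn t s hns hts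
    have hne1s : ¬ Rel ⇑p e1m s := fun h => absurd (aI_le hp h.symm) (not_le.2 h12)
    have he1s : e1m ≤ s := le_trans h12.le (aI_le_self hp s)
    obtain ⟨e2m, he2E, h21, h22⟩ := hbtwn e1m s hne1s he1s
    have hup : φr t ≤ val ⟨e1m, he1E⟩ := by
      refine csSup_le (hne t) ?_
      rintro x (rfl | ⟨e', he', rfl⟩)
      · exact (hv0 _).le
      · exact (hvmono (Subtype.mk_lt_mk.2 (lt_of_le_of_lt he' h11))).le
    have hdn : val ⟨e2m, he2E⟩ ≤ φr s := by
      refine le_csSup (hbdd s) (Set.mem_insert_of_mem _ ⟨⟨e2m, he2E⟩, ?_, rfl⟩)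
      exact le_trans (le_trans h22.le (aI_le_self hp s)) (self_le_bI hp s)
    have hmid : val ⟨e1m, he1E⟩ < val ⟨e2m, he2E⟩ := by
      refine hvmono (Subtype.mk_lt_mk.2 ?_)
      calc e1m = bI hp e1m := (hEfix e1m he1E).symm
        _ < e2m := h21
    linarith
  have hφr0 : φr 0 = 0 := by
    have hempty : {e : ↥E | (e:I) ≤ bI hp 0} = ∅ := by
      ext e
      simp only [Set.mem_setOf_eq, Set.mem_empty_iff_false, iff_false, not_le]
      have hn0e : ¬ Rel ⇑p 0 (e:I) := fun h => e.2.2.1 h.symm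
      have hlt := bI_lt_aI hp hn0e nonneg'
      calc bI hp 0 < aI hp (e:I) := hlt
        _ ≤ (e:I) := aI_le_self hp _
    rw [hφr]
    simp only [hempty, Set.image_empty]
    rw [show insert (0:ℝ) (∅ : Set ℝ) = {0} by ext z; simp, csSup_singleton]
  have hφr1 : φr 1 = 1 := by
    refine le_antisymm (hφr01 1).2 ?_
    by_contra hlt
    push_neg at hlt
    obtain ⟨qq, hq1, hq2⟩ := exists_rat_btwn hlt
    have hq0 : (0:ℚ) < qq := by exact_mod_cast lt_of_le_of_lt (hφr01 1).1 hq1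
    have hq1' : qq < 1 := by exact_mod_cast hq2
    set e := g.symm ⟨qq, hq0, hq1'⟩ with he
    have hve : val e = (qq:ℝ) := by
      simp only [hval, he, OrderIso.apply_symm_apply]
    have hmem : val e ∈ insert (0:ℝ) (val '' {e' : ↥E | (e':I) ≤ bI hp 1}) :=
      Set.mem_insert_of_mem _ ⟨e, le_trans le_one' (self_le_bI hp 1), rfl⟩
    have := le_csSup (hbdd 1) hmem
    rw [hve] at this
    linarith
  set φI : I → I := fun t => ⟨φr t, hφr01 t⟩ with hφI
  have hφImono : Monotone φI := fun t s h => Subtype.coe_le_coe.1 (hφmono' t s h)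
  have hφI0 : φI 0 = 0 := Subtype.ext hφr0
  have hφI1 : φI 1 = 1 := Subtype.ext hφr1
  have hφIdense : DenseRange φI := by
    rw [Metric.denseRange_iff]
    intro u ε hε
    by_cases hu0 : (u:ℝ) = 0
    · exact ⟨0, by simp [Subtype.dist_eq, hφI, hφr0, hu0, hε]⟩
    by_cases hu1 : (u:ℝ) = 1
    · exact ⟨1, by simp [Subtype.dist_eq, hφI, hφr1, hu1, hε]⟩
    have h0u : 0 < (u:ℝ) := lt_of_le_of_ne u.2.1 (Ne.symm hu0)
    have hu1' : (u:ℝ) < 1 := lt_of_le_of_ne u.2.2 hu1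
    have hmax : max ((u:ℝ) - ε) 0 < u := max_lt (by linarith) h0u
    obtain ⟨qq, hq1, hq2⟩ := exists_rat_btwn hmax
    have hq0 : (0:ℚ) < qq := by exact_mod_cast lt_of_le_of_lt (le_max_right _ _) hq1
    have hq1' : qq < 1 := by exact_mod_cast lt_trans hq2 hu1'
    set e := g.symm ⟨qq, hq0, hq1'⟩ with he
    have hve : val e = (qq:ℝ) := by
      simp only [hval, he, OrderIso.apply_symm_apply]
    refine ⟨(e:I), ?_⟩
    have hfe : φr (e:I) = val e := by
      refine le_antisymm ?_ ?_
      · refine csSup_le (hne _) ?_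
        rintro x (rfl | ⟨e', he', rfl⟩)
        · exact (hv0 _).le
        · have hle : (e':I) ≤ (e:I) := le_trans he' (le_of_eq (hEfix _ e.2))
          rcases eq_or_lt_of_le hle with heq | hlt2
          · exact le_of_eq (congrArg val (Subtype.ext heq))
          · exact (hvmono (Subtype.mk_lt_mk.2 hlt2)).le
      · exact le_csSup (hbdd _) (Set.mem_insert_of_mem _
          ⟨e, le_of_eq (hEfix _ e.2).symm, rfl⟩)
    rw [Subtype.dist_eq]
    show |(u:ℝ) - φr (e:I)| < ε
    rw [hfe, hve]
    rw [abs_lt]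
    constructor
    · linarith
    · have hle : (u:ℝ) - ε ≤ max ((u:ℝ) - ε) 0 := le_max_left _ _
      linarith
  have hφIcont : Continuous φI := hφImono.continuous_of_denseRange hφIdense
  have hφIrepar : IsRepar φI := ⟨hφIcont, hφImono, hφI0, hφI1⟩
  have hφIsurj : Function.Surjective φI := repar_surj hφIrepar
  have hcollapse : ∀ t s : I, φI t = φI s → p t = p s := by
    intro t s h
    have hcoe : φr t = φr s := congrArg (fun z : I => (z:ℝ)) h
    rcases le_total t s with hts | hst
    · by_cases hr : Rel ⇑p t s
      · exact hr.eq
      · exact absurd hcoe (ne_of_lt (hφlt t s hr hts))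
    · by_cases hr : Rel ⇑p s t
      · exact hr.eq.symm
      · exact absurd hcoe.symm (ne_of_lt (hφlt s t hr hst))
  set sec : I → I := fun u => Classical.choose (hφIsurj u) with hsec
  have hsecspec : ∀ u, φI (sec u) = u := fun u => Classical.choose_spec (hφIsurj u)
  set q0 : I → X := fun u => p (sec u) with hq0
  have hfac : ∀ t, p t = q0 (φI t) := fun t => (hcollapse _ _ (hsecspec (φI t))).symm
  have hq0cont : Continuous q0 := by
    have hqm : IsQuotientMap φI := hφIcont.isClosedMap.isQuotientMap hφIcont hφIsurj
    rw [hqm.continuous_iff]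
    have hcomp : q0 ∘ φI = ⇑p := funext fun t => (hfac t).symm
    rw [hcomp]
    exact hp
  have hreg : IsRegularPath q0 := by
    right
    intro a b hab hconst'
    have h1 : φI (sec a) = a := hsecspec a
    have h2 : φI (sec b) = b := hsecspec b
    have hsab : sec a < sec b := by
      rcases lt_trichotomy (sec a) (sec b) with h | h | h
      · exact h
      · have : a = b := by rw [← h1, ← h2, h]
        exact absurd this (ne_of_lt hab)
      · have : b ≤ a := by rw [← h1, ← h2]; exact hφImono h.le
        exact absurd this (not_le.2 hab)
    have hinf : sec a ⊓ sec b = sec a := inf_eq_left.2 hsab.le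
    have hsup : sec a ⊔ sec b = sec b := sup_eq_right.2 hsab.le
    have hrel : Rel ⇑p (sec a) (sec b) := by
      intro s' hs' t' ht'
      rw [hinf, hsup] at hs' ht'
      have hmem : ∀ w : I, w ∈ Set.Icc (sec a) (sec b) → φI w ∈ Set.Icc a b := by
        intro w hw
        exact ⟨h1 ▸ hφImono hw.1, h2 ▸ hφImono hw.2⟩
      rw [hfac s', hfac t']
      exact hconst' (φI s') (hmem s' hs') (φI t') (hmem t' ht')
    have hcontr : a = b := by
      rw [← h1, ← h2]
      exact Subtype.ext (hφeq _ _ hrel)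
    exact absurd hcontr (ne_of_lt hab)
  exact ⟨⟨q0, hq0cont⟩, φI, hφIrepar, hreg, hfac⟩

end Regularize

section Cancel
variable {X : Type*} [TopologicalSpace X]

theorem cancel {p q : I → X}
    (hp : IsRegularPath p) (hq : IsRegularPath q) {φ ψ : I → I}
    (hφ : IsRepar φ) (hψ : IsRepar ψ) (h : ∀ t, p (φ t) = q (ψ t)) :
    ∃ ρ : I → I, IsRepar ρ ∧ StrictMono ρ ∧ ∀ t, q t = p (ρ t) := by
  classical
  rcases hp with hpc | hpreg
  · refine ⟨id, isRepar_id, strictMono_id, ?_⟩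
    intro t
    obtain ⟨s, hs⟩ := repar_surj hψ t
    rw [← hs, ← h s]
    exact hpc (φ s) (id (ψ s))
  have hp01 : ¬ ConstOn p 0 1 := hpreg 0 1 (by norm_num)
  rcases hq with hqc | hqreg
  · exfalso
    apply hp01
    intro s _ t _
    obtain ⟨s', hs'⟩ := repar_surj hφ s
    obtain ⟨t', ht'⟩ := repar_surj hφ t
    rw [← hs', ← ht', h s', h t']
    exact hqc _ _
  set sψ : I → I := fun u => Classical.choose (repar_surj hψ u) with hsψdef
  have hsψspec : ∀ u, ψ (sψ u) = u := fun u => Classical.choose_spec (repar_surj hψ u)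
  have hwd : ∀ t t' : I, ψ t = ψ t' → φ t = φ t' := by
    have main : ∀ t t' : I, t ≤ t' → ψ t = ψ t' → φ t = φ t' := by
      intro t t' htt' heq
      by_contra hne
      have hlt : φ t < φ t' := lt_of_le_of_ne (hφ.2.1 htt') hne
      apply hpreg (φ t) (φ t') hlt
      intro u hu w hw
      obtain ⟨τu, hτu1, hτu2, hτu3⟩ := ivt φ hφ.1 htt' hu.1 hu.2
      obtain ⟨τw, hτw1, hτw2, hτw3⟩ := ivt φ hφ.1 htt' hw.1 hw.2
      have hψconst : ∀ τ : I, t ≤ τ → τ ≤ t' → ψ τ = ψ t := by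
        intro τ h1 h2
        exact le_antisymm ((hψ.2.1 h2).trans (le_of_eq heq.symm)) (hψ.2.1 h1)
      rw [← hτu3, ← hτw3, h τu, h τw, hψconst τu hτu1 hτu2, hψconst τw hτw1 hτw2]
    intro t t' heq
    rcases le_total t t' with h1 | h1
    · exact main t t' h1 heq
    · exact (main t' t h1 heq.symm).symm
  set ρ : I → I := fun u => φ (sψ u) with hρdef
  have hρspec : ∀ t, ρ (ψ t) = φ t := fun t => hwd _ _ (hsψspec (ψ t))
  have hval : ∀ t, q t = p (ρ t) := by
    intro t
    have h2 : q (ψ (sψ t)) = p (φ (sψ t)) := (h (sψ t)).symm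
    rw [hsψspec t] at h2
    exact h2
  have hmono : Monotone ρ := by
    intro u u' huu'
    rcases le_total (sψ u) (sψ u') with h1 | h1
    · exact hφ.2.1 h1
    · have h2 : u' ≤ u := by
        have h3 := hψ.2.1 h1
        rwa [hsψspec, hsψspec] at h3
      have h4 : u = u' := le_antisymm huu' h2
      rw [h4]
  have hsurj : Function.Surjective ρ := by
    intro u
    obtain ⟨t, ht⟩ := repar_surj hφ u
    exact ⟨ψ t, by rw [hρspec t, ht]⟩
  have hρ0 : ρ 0 = 0 := by
    have h2 := hρspec 0
    rw [hψ.2.2.1] at h2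
    rw [h2, hφ.2.2.1]
  have hρ1 : ρ 1 = 1 := by
    have h2 := hρspec 1
    rw [hψ.2.2.2] at h2
    rw [h2, hφ.2.2.2]
  have hcont : Continuous ρ := hmono.continuous_of_surjective hsurj
  have hstrict : StrictMono ρ := by
    intro u u' hlt
    refine lt_of_le_of_ne (hmono hlt.le) ?_
    intro heqρ
    have heqρ' : φ (sψ u) = φ (sψ u') := heqρ
    have htt' : sψ u < sψ u' := by
      rcases lt_trichotomy (sψ u) (sψ u') with h2 | h2 | h2
      · exact h2
      · have h3 : u = u' := by rw [← hsψspec u, ← hsψspec u', h2]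
        exact absurd (h3 ▸ hlt) (lt_irrefl _)
      · have h3 := hψ.2.1 h2.le
        rw [hsψspec, hsψspec] at h3
        exact absurd hlt (not_lt.2 h3)
    apply hqreg u u' hlt
    have key : ∀ w : I, u ≤ w → w ≤ u' → q w = p (φ (sψ u)) := by
      intro w h1 h2
      obtain ⟨τ, hτ1, hτ2, hτ3⟩ := ivt ψ hψ.1 (v := w) htt'.le
        (by rw [hsψspec]; exact h1) (by rw [hsψspec]; exact h2)
      have hφτ : φ τ = φ (sψ u) :=
        le_antisymm (le_of_le_of_eq (hφ.2.1 hτ2) heqρ'.symm) (hφ.2.1 hτ1)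
      rw [← hτ3, ← h τ, hφτ]
    intro w hw z hz
    rw [key w hw.1 hw.2, key z hz.1 hz.2]
  exact ⟨ρ, ⟨hcont, hmono, hρ0, hρ1⟩, hstrict, hval⟩

end Cancel

section Helpers

lemma regular_comp {X : Type*} {f : I → X} (hf : IsRegularPath f) {ρ : I → I}
    (hρ : IsRepar ρ) (hs : StrictMono ρ) : IsRegularPath (fun t => f (ρ t)) := by
  rcases hf with hc | hreg
  · exact Or.inl fun s t => hc _ _
  · refine Or.inr ?_
    intro a b hab hcon
    apply hreg (ρ a) (ρ b) (hs hab)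
    intro u hu w hw
    obtain ⟨τu, hτu1, hτu2, hτu3⟩ := ivt ρ hρ.1 (v := u) hab.le hu.1 hu.2
    obtain ⟨τw, hτw1, hτw2, hτw3⟩ := ivt ρ hρ.1 (v := w) hab.le hw.1 hw.2
    rw [← hτu3, ← hτw3]
    exact hcon τu ⟨hτu1, hτu2⟩ τw ⟨hτw1, hτw2⟩

lemma finite_exists_pos {ι : Type*} {S : Set ι} (hS : S.Finite) {P : ι → ℝ → Prop}
    (hmono : ∀ i, ∀ δ δ' : ℝ, 0 < δ' → δ' ≤ δ → P i δ → P i δ')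
    (hex : ∀ i ∈ S, ∃ δ > 0, P i δ) : ∃ δ > 0, ∀ i ∈ S, P i δ := by
  classical
  have main : ∀ T : Finset ι, (∀ i ∈ T, ∃ δ > 0, P i δ) → ∃ δ > 0, ∀ i ∈ T, P i δ := by
    intro T
    induction T using Finset.induction_on with
    | empty => exact fun _ => ⟨1, zero_lt_one, by simp⟩
    | @insert a s ha ih =>
      intro hex'
      obtain ⟨δ1, hδ1, h1⟩ := hex' a (Finset.mem_insert_self _ _)
      obtain ⟨δ2, hδ2, h2⟩ := ih fun i hi => hex' i (Finset.mem_insert_of_mem hi)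
      refine ⟨min δ1 δ2, lt_min hδ1 hδ2, ?_⟩
      intro i hi
      rcases Finset.mem_insert.1 hi with rfl | hi'
      · exact hmono i δ1 _ (lt_min hδ1 hδ2) (min_le_left _ _) h1
      · exact hmono i δ2 _ (lt_min hδ1 hδ2) (min_le_right _ _) (h2 i hi')
  obtain ⟨δ, hδ, hall⟩ := main hS.toFinset (fun i hi => hex i (hS.mem_toFinset.1 hi))
  exact ⟨δ, hδ, fun i hi => hall i (hS.mem_toFinset.2 hi)⟩

lemma exists_grid (m : ℕ) (hm : 1 ≤ m) {z : ℝ} (h0 : 0 ≤ z) (h1 : z ≤ 1) :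
    ∃ k : ℕ, k < m ∧ (k:ℝ)/m ≤ z ∧ z ≤ ((k:ℝ)+1)/m := by
  have hmpos : (0:ℝ) < m := by exact_mod_cast hm
  refine ⟨min (Nat.floor ((m:ℝ) * z)) (m - 1), ?_, ?_, ?_⟩
  · exact lt_of_le_of_lt (min_le_right _ _) (Nat.sub_lt hm zero_lt_one)
  · rw [div_le_iff₀ hmpos]
    calc ((min (Nat.floor ((m:ℝ) * z)) (m - 1) : ℕ) : ℝ) ≤ ((Nat.floor ((m:ℝ)*z) : ℕ) : ℝ) :=
          by exact_mod_cast min_le_left _ _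
      _ ≤ (m:ℝ) * z := Nat.floor_le (by positivity)
      _ = z * m := mul_comm _ _
  · rw [le_div_iff₀ hmpos]
    rcases le_or_gt (Nat.floor ((m:ℝ)*z)) (m-1) with hc | hc
    · have hk : min (Nat.floor ((m:ℝ) * z)) (m-1) = Nat.floor ((m:ℝ)*z) := min_eq_left hc
      have hlt := Nat.lt_floor_add_one ((m:ℝ)*z)
      rw [hk]
      linarith [mul_comm (m:ℝ) z]
    · have hk : min (Nat.floor ((m:ℝ) * z)) (m-1) = m - 1 := min_eq_right hc.le
      rw [hk]
      have hcast : ((m - 1 : ℕ):ℝ) = (m:ℝ) - 1 := by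
        rw [Nat.cast_sub hm]; norm_num
      rw [hcast]
      have : z * m ≤ 1 * m := mul_le_mul_of_nonneg_right h1 hmpos.le
      linarith

lemma exists_pl_repar (m : ℕ) (hm : 1 ≤ m) (v' : ℕ → ℝ) (h0 : v' 0 = 0) (h1 : v' m = 1)
    (hstrict : ∀ k < m, v' k < v' (k+1)) :
    ∃ ρ : I → I, IsRepar ρ ∧ StrictMono ρ ∧
      ∀ k < m, ∀ τ : I, (k:ℝ)/m ≤ (τ:ℝ) → (τ:ℝ) ≤ ((k:ℝ)+1)/m →
        v' k ≤ (ρ τ : ℝ) ∧ (ρ τ : ℝ) ≤ v' (k+1) := by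
  have hmpos : (0:ℝ) < m := by exact_mod_cast hm
  have hmne : (m:ℝ) ≠ 0 := ne_of_gt hmpos
  set c : ℕ → ℝ → ℝ := fun k τ => max 0 (min 1 ((m:ℝ)*τ - k)) with hc
  set R : ℝ → ℝ := fun τ => ∑ k ∈ Finset.range m, (v' (k+1) - v' k) * c k τ with hR
  have hccont : ∀ k, Continuous (c k) := by
    intro k
    exact continuous_const.max (continuous_const.min
      ((continuous_const.mul continuous_id).sub continuous_const))
  have hRcont : Continuous R := by
    apply continuous_finset_sum
    intro k _
    exact continuous_const.mul (hccont k)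
  have hcmono : ∀ k, Monotone (c k) := by
    intro k a b hab
    exact max_le_max le_rfl (min_le_min le_rfl
      (sub_le_sub_right (mul_le_mul_of_nonneg_left hab hmpos.le) _))
  have hcoeff : ∀ k < m, 0 ≤ v' (k+1) - v' k := fun k hk => sub_nonneg.2 (hstrict k hk).le
  have hRmono : Monotone R := by
    intro a b hab
    apply Finset.sum_le_sum
    intro k hk
    exact mul_le_mul_of_nonneg_left (hcmono k hab) (hcoeff k (Finset.mem_range.1 hk))
  have hRval : ∀ k, k ≤ m → R ((k:ℝ)/m) = v' k := by
    intro k hk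
    have hmk : (m:ℝ) * ((k:ℝ)/m) = k := by field_simp
    have hterm : ∀ j ∈ Finset.range m, (v' (j+1) - v' j) * c j ((k:ℝ)/m)
        = if j < k then v' (j+1) - v' j else 0 := by
      intro j _
      rw [hc]
      simp only []
      rw [hmk]
      by_cases hjk : j < k
      · have h1' : (1:ℝ) ≤ (k:ℝ) - j := by
          have : (j:ℝ) + 1 ≤ k := by exact_mod_cast hjk
          linarith
        rw [min_eq_left h1', max_eq_right zero_le_one, if_pos hjk, mul_one]
      · have h1' : (k:ℝ) - j ≤ 0 := by
          have : (k:ℝ) ≤ j := by exact_mod_cast not_lt.1 hjk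
          linarith
        rw [min_eq_right (by linarith : (k:ℝ) - j ≤ 1), max_eq_left h1', if_neg hjk, mul_zero]
    rw [hR]
    simp only []
    rw [Finset.sum_congr rfl hterm]
    rw [← Finset.sum_subset (Finset.range_subset_range.2 hk)
      (fun x _ hxk => if_neg (by simpa using hxk))]
    rw [Finset.sum_congr rfl (fun j hj => if_pos (Finset.mem_range.1 hj))]
    rw [Finset.sum_range_sub v', h0, sub_zero]
  have hR0 : R 0 = 0 := by
    have := hRval 0 (Nat.zero_le m)
    simpa [h0] using this
  have hR1 : R 1 = 1 := by
    have := hRval m le_rfl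
    rw [div_self hmne] at this
    rw [this, h1]
  have hkey : ∀ a b : ℝ, 0 ≤ a → a < b → b ≤ 1 → R a < R b := by
    intro a b ha hab hb1
    have ha1 : a < 1 := lt_of_lt_of_le hab hb1
    have hfl : Nat.floor ((m:ℝ)*a) ≤ m - 1 := by
      by_contra hx
      push_neg at hx
      have hmle : m ≤ Nat.floor ((m:ℝ)*a) := Nat.le_of_pred_lt hx
      have : (m:ℝ) ≤ (m:ℝ)*a := le_trans (by exact_mod_cast hmle) (Nat.floor_le (by positivity))
      nlinarith
    set k := Nat.floor ((m:ℝ)*a) with hkdef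
    have hkm : k < m := lt_of_le_of_lt hfl (Nat.sub_lt hm zero_lt_one)
    have hka : (k:ℝ) ≤ (m:ℝ)*a := Nat.floor_le (by positivity)
    have hka1 : (m:ℝ)*a < (k:ℝ) + 1 := Nat.lt_floor_add_one _
    apply Finset.sum_lt_sum
    · intro j hj
      exact mul_le_mul_of_nonneg_left (hcmono j hab.le) (hcoeff j (Finset.mem_range.1 hj))
    · refine ⟨k, Finset.mem_range.2 hkm, ?_⟩
      have hca : c k a = (m:ℝ)*a - k := by
        rw [hc]
        simp only []
        rw [min_eq_right (by linarith), max_eq_right (by linarith)]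
      have hcb : (m:ℝ)*a - k < c k b := by
        rw [hc]
        simp only []
        refine lt_of_lt_of_le (lt_min (by linarith) ?_) (le_max_right _ _)
        have : (m:ℝ)*a < (m:ℝ)*b := by nlinarith
        linarith
      rw [hca]
      exact mul_lt_mul_of_pos_left hcb (sub_pos.2 (hstrict k hkm))
  have hmem : ∀ τ : I, R (τ:ℝ) ∈ I := by
    intro τ
    constructor
    · rw [← hR0]; exact hRmono τ.2.1
    · rw [← hR1]; exact hRmono τ.2.2
  refine ⟨fun τ => ⟨R (τ:ℝ), hmem τ⟩, ⟨?_, ?_, ?_, ?_⟩, ?_, ?_⟩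
  · exact (hRcont.comp continuous_subtype_val).subtype_mk _
  · intro a b hab
    exact Subtype.coe_le_coe.1 (hRmono (Subtype.coe_le_coe.2 hab))
  · exact Subtype.ext (by simpa using hR0)
  · exact Subtype.ext (by simpa using hR1)
  · intro a b hab
    exact Subtype.mk_lt_mk.2 (hkey (a:ℝ) (b:ℝ) a.2.1 (Subtype.coe_lt_coe.2 hab) b.2.2)
  · intro k hk τ hτ1 hτ2
    constructor
    · rw [← hRval k hk.le]
      exact hRmono hτ1
    · rw [← hRval (k+1) hk]
      refine le_trans (hRmono hτ2) (le_of_eq ?_)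
      norm_num
  
end Helpers

section ContinuityD
variable {X : Type*} [TopologicalSpace X] [T2Space X] {x y : X}

set_option maxHeartbeats 2000000 in
theorem continuous_regquot (Reg : PathXY X x y → RegXY X x y) (Φ : PathXY X x y → I → I)
    (hΦ : ∀ pp, IsRepar (Φ pp)) (hfac : ∀ pp (t : I), pp.1 t = (Reg pp).1 (Φ pp t)) :
    Continuous fun pp => Quot.mk (@HomeoRel X _ x y) (Reg pp) := by
  classical
  rw [continuous_def]
  intro W hW
  have hV : IsOpen ((Quot.mk (@HomeoRel X _ x y)) ⁻¹' W) := hW.preimage continuous_quot_mk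
  obtain ⟨V₀, hV₀open, hV₀eq⟩ := isOpen_induced_iff.1 hV
  rw [isOpen_iff_forall_mem_open]
  intro pp hpp
  have hmemV : ((Reg pp).1 : C(I,X)) ∈ V₀ := by
    have h1 : Reg pp ∈ (Quot.mk (@HomeoRel X _ x y)) ⁻¹' W := hpp
    rw [← hV₀eq] at h1
    exact h1
  obtain ⟨B, hB, hfB, hBV⟩ := (TopologicalSpace.isTopologicalBasis_of_subbasis
    (ContinuousMap.compactOpen_eq (X := I) (Y := X))).exists_subset_of_mem_open hmemV hV₀open
  obtain ⟨S, ⟨hSfin, hSsub⟩, rfl⟩ := hB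
  have hKU : ∀ s ∈ S, ∃ K U, IsCompact K ∧ IsOpen U ∧ s = {f : C(I,X) | Set.MapsTo ⇑f K U} := by
    intro s hs
    obtain ⟨K, hK, U, hU, hs'⟩ := hSsub hs
    exact ⟨K, U, hK, hU, hs'.symm⟩
  choose! Kf Uf hKc hUo hsEq using hKU
  have hmaps : ∀ s ∈ S, Set.MapsTo ⇑(Reg pp).1 (Kf s) (Uf s) := by
    intro s hs
    have h1 : ((Reg pp).1 : C(I,X)) ∈ s := Set.mem_sInter.1 hfB s hs
    rw [hsEq s hs] at h1
    exact h1
  obtain ⟨δ, hδpos, hδ⟩ : ∃ δ > 0, ∀ s ∈ S,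
      Metric.thickening δ (Kf s) ⊆ ⇑(Reg pp).1 ⁻¹' (Uf s) := by
    apply finite_exists_pos hSfin
    · intro s δ δ' hδ' hle h
      exact subset_trans (Metric.thickening_mono hle _) h
    · intro s hs
      exact (hKc s hs).exists_thickening_subset_open
        ((hUo s hs).preimage (Reg pp).1.continuous) (fun z hz => hmaps s hs hz)
  obtain ⟨m0, hm0⟩ := exists_nat_gt (2/δ)
  set m : ℕ := m0 + 1 with hmdef
  have hm1 : 1 ≤ m := Nat.le_add_left 1 m0
  have hmpos : (0:ℝ) < m := by exact_mod_cast hm1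
  have hmδ : 1/(m:ℝ) < δ := by
    have h1 : 2/δ < (m:ℝ) := lt_trans hm0 (by exact_mod_cast Nat.lt_succ_self m0)
    have h2 : 2 < (m:ℝ) * δ := by
      have := (div_lt_iff₀ hδpos).1 h1
      linarith
    rw [div_lt_iff₀ hmpos]
    nlinarith
  set e : ℕ → I := fun k => Set.projIcc (0:ℝ) 1 zero_le_one ((k:ℝ)/m) with he
  have hecoe : ∀ k, k ≤ m → (e k : ℝ) = (k:ℝ)/m := by
    intro k hk
    have hmem : (k:ℝ)/m ∈ Set.Icc (0:ℝ) 1 :=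
      ⟨by positivity, by rw [div_le_one hmpos]; exact_mod_cast hk⟩
    rw [he]
    show (Set.projIcc (0:ℝ) 1 zero_le_one ((k:ℝ)/m) : ℝ) = (k:ℝ)/m
    rw [Set.projIcc_of_mem zero_le_one hmem]
  have he0 : e 0 = 0 := Subtype.ext (by rw [hecoe 0 (Nat.zero_le m)]; simp)
  have hem : e m = 1 := Subtype.ext (by rw [hecoe m le_rfl]; field_simp; simp)
  set tk : ℕ → I := fun k => if k = 0 then 0 else if m ≤ k then 1
    else Classical.choose (repar_surj (hΦ pp) (e k)) with htkdef
  have htkspec : ∀ k, k ≤ m → Φ pp (tk k) = e k := by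
    intro k hk
    rw [htkdef]
    show Φ pp (if k = 0 then 0 else if m ≤ k then 1
      else Classical.choose (repar_surj (hΦ pp) (e k))) = e k
    by_cases h0 : k = 0
    · rw [if_pos h0, (hΦ pp).2.2.1, h0, he0]
    · rw [if_neg h0]
      by_cases hm' : m ≤ k
      · have hkm : k = m := le_antisymm hk hm'
        rw [if_pos hm', (hΦ pp).2.2.2, hkm, hem]
      · rw [if_neg hm']
        exact Classical.choose_spec (repar_surj (hΦ pp) (e k))
  have htkmono : ∀ k, k + 1 ≤ m → tk k < tk (k+1) := by
    intro k hk
    have h1 : Φ pp (tk k) = e k := htkspec k (Nat.le_of_succ_le hk)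
    have h2 : Φ pp (tk (k+1)) = e (k+1) := htkspec (k+1) hk
    have helt : e k < e (k+1) := by
      rw [← Subtype.coe_lt_coe, hecoe k (Nat.le_of_succ_le hk), hecoe (k+1) hk]
      rw [div_lt_div_iff₀ hmpos hmpos]
      have : (k:ℝ) < ((k+1:ℕ):ℝ) := by exact_mod_cast Nat.lt_succ_self k
      nlinarith
    by_contra hle
    push_neg at hle
    have h3 := (hΦ pp).2.1 hle
    rw [h1, h2] at h3
    exact absurd helt (not_lt.2 h3)
  set J : Set C(I,X) → Set ℕ :=
    fun s => {k | k < m ∧ (Set.Icc (e k) (e (k+1)) ∩ Kf s).Nonempty} with hJdef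
  have hJfin : ∀ s, (J s).Finite :=
    fun s => Set.Finite.subset (Set.finite_Iio m) (fun k hk => hk.1)
  set L : Set C(I,X) → Set I := fun s => ⋃ k ∈ J s, Set.Icc (e k) (e (k+1)) with hLdef
  have hLclosed : ∀ s, IsClosed (L s) := by
    intro s
    apply Set.Finite.isClosed_biUnion (hJfin s)
    intro k _
    exact isClosed_Icc
  set Cs : Set C(I,X) → Set I := fun s => Φ pp ⁻¹' (L s) with hCsdef
  have hCcompact : ∀ s, IsCompact (Cs s) :=
    fun s => ((hLclosed s).preimage (hΦ pp).1).isCompact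
  have hLA : ∀ s ∈ S, L s ⊆ ⇑(Reg pp).1 ⁻¹' (Uf s) := by
    intro s hs w hw
    simp only [hLdef, Set.mem_iUnion] at hw
    obtain ⟨k, hkJ, hwk⟩ := hw
    obtain ⟨z, hz1, hz2⟩ := hkJ.2
    apply hδ s hs
    rw [Metric.mem_thickening_iff]
    refine ⟨z, hz2, ?_⟩
    rw [Subtype.dist_eq, Real.dist_eq]
    have hcast : ((k+1:ℕ):ℝ)/m = ((k:ℝ)+1)/m := by push_cast; ring
    have hwc : (w:ℝ) ∈ Set.Icc ((k:ℝ)/m) (((k:ℝ)+1)/m) := by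
      constructor
      · rw [← hecoe k hkJ.1.le]; exact_mod_cast hwk.1
      · rw [← hcast, ← hecoe (k+1) hkJ.1]; exact_mod_cast hwk.2
    have hzc : (z:ℝ) ∈ Set.Icc ((k:ℝ)/m) (((k:ℝ)+1)/m) := by
      constructor
      · rw [← hecoe k hkJ.1.le]; exact_mod_cast hz1.1
      · rw [← hcast, ← hecoe (k+1) hkJ.1]; exact_mod_cast hz1.2
    have hdiff : ((k:ℝ)+1)/m - (k:ℝ)/m = 1/m := by ring
    have habs : |(w:ℝ) - (z:ℝ)| ≤ 1/m := by
      rw [abs_le]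
      constructor
      · linarith [hwc.1, hzc.2]
      · linarith [hwc.2, hzc.1]
    exact lt_of_le_of_lt habs hmδ
  set N : Set (PathXY X x y) := {f | ∀ s ∈ S, Set.MapsTo ⇑f.1 (Cs s) (Uf s)} with hNdef
  refine ⟨N, ?_, ?_, ?_⟩
  · -- N ⊆ preimage of W
    intro qq hqq
    set Ψ : I → I := Φ qq with hΨdef
    set v : ℕ → I := fun k => Ψ (tk k) with hvdef
    have hv0 : v 0 = 0 := by
      rw [hvdef]
      show Ψ (tk 0) = 0
      have htk0 : tk 0 = 0 := by simp [htkdef]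
      rw [htk0]
      exact (hΦ qq).2.2.1
    have hvm : v m = 1 := by
      rw [hvdef]
      show Ψ (tk m) = 1
      have hm0' : m ≠ 0 := Nat.one_le_iff_ne_zero.1 hm1
      have htkm : tk m = 1 := by simp [htkdef, hm0']
      rw [htkm]
      exact (hΦ qq).2.2.2
    have hvmono : ∀ k, k+1 ≤ m → v k ≤ v (k+1) :=
      fun k hk => (hΦ qq).2.1 (htkmono k hk).le
    have hO : ∀ s ∈ S, IsOpen (⇑(Reg qq).1 ⁻¹' (Uf s)) :=
      fun s hs => (hUo s hs).preimage (Reg qq).1.continuous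
    have hclaim1 : ∀ s ∈ S, ∀ k ∈ J s,
        Set.Icc (v k) (v (k+1)) ⊆ ⇑(Reg qq).1 ⁻¹' (Uf s) := by
      intro s hs k hkJ w hw
      obtain ⟨τ, hτ1, hτ2, hτ3⟩ := ivt Ψ (hΦ qq).1 (v := w) (htkmono k hkJ.1).le hw.1 hw.2
      have hτC : τ ∈ Cs s := by
        show Φ pp τ ∈ L s
        simp only [hLdef, Set.mem_iUnion]
        refine ⟨k, hkJ, ?_, ?_⟩
        · rw [← htkspec k hkJ.1.le]
          exact (hΦ pp).2.1 hτ1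
        · rw [← htkspec (k+1) hkJ.1]
          exact (hΦ pp).2.1 hτ2
      have hqmem : qq.1 τ ∈ Uf s := hqq s hs hτC
      rw [hfac qq τ] at hqmem
      show (Reg qq).1 w ∈ Uf s
      rw [← hτ3]
      exact hqmem
    obtain ⟨ε, hεpos, hε⟩ : ∃ ε > 0, ∀ s ∈ S, ∀ k ∈ J s,
        Metric.thickening ε (Set.Icc (v k) (v (k+1))) ⊆ ⇑(Reg qq).1 ⁻¹' (Uf s) := by
      apply finite_exists_pos hSfin
      · intro s δ1 δ2 hδ2 hle h k hk
        exact subset_trans (Metric.thickening_mono hle _) (h k hk)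
      · intro s hs
        apply finite_exists_pos (hJfin s)
        · intro k δ1 δ2 hδ2 hle h
          exact subset_trans (Metric.thickening_mono hle _) h
        · intro k hk
          exact (isClosed_Icc.isCompact).exists_thickening_subset_open
            (hO s hs) (hclaim1 s hs k hk)
    set δ' : ℝ := ε/(4*(m:ℝ)+4) with hδ'def
    have h4pos : (0:ℝ) < 4*(m:ℝ)+4 := by positivity
    have hδ'pos : 0 < δ' := by positivity
    have hεbig : 2*(m:ℝ)*δ' < ε := by
      have heq2 : 2*(m:ℝ)*δ' = ε * (2*(m:ℝ)/(4*(m:ℝ)+4)) := by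
        rw [hδ'def]; ring
      have hlt1 : 2*(m:ℝ)/(4*(m:ℝ)+4) < 1 := (div_lt_one h4pos).2 (by linarith)
      calc 2*(m:ℝ)*δ' = ε * (2*(m:ℝ)/(4*(m:ℝ)+4)) := heq2
        _ < ε * 1 := mul_lt_mul_of_pos_left hlt1 hεpos
        _ = ε := mul_one ε
    have denompos : (0:ℝ) < 1 + (m:ℝ)*δ' := by positivity
    set v' : ℕ → ℝ := fun k => ((v k : ℝ) + (k:ℝ)*δ')/(1 + (m:ℝ)*δ') with hv'def
    have hv'0 : v' 0 = 0 := by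
      rw [hv'def]
      show (((v 0 : I) : ℝ) + (0:ℕ)*δ')/(1 + (m:ℝ)*δ') = 0
      rw [hv0]
      simp
    have hv'm : v' m = 1 := by
      rw [hv'def]
      show (((v m : I) : ℝ) + (m:ℝ)*δ')/(1 + (m:ℝ)*δ') = 1
      rw [hvm]
      show ((1:ℝ) + (m:ℝ)*δ')/(1 + (m:ℝ)*δ') = 1
      exact div_self (ne_of_gt denompos)
    have hv'strict : ∀ k < m, v' k < v' (k+1) := by
      intro k hk
      rw [hv'def]
      show (((v k : I):ℝ) + (k:ℝ)*δ')/(1 + (m:ℝ)*δ')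
        < (((v (k+1) : I):ℝ) + ((k+1:ℕ):ℝ)*δ')/(1 + (m:ℝ)*δ')
      rw [div_lt_div_iff₀ denompos denompos]
      have hvk : ((v k : I):ℝ) ≤ ((v (k+1) : I):ℝ) := Subtype.coe_le_coe.2 (hvmono k hk)
      have hcast : ((k+1:ℕ):ℝ) = (k:ℝ) + 1 := by push_cast; ring
      rw [hcast]
      nlinarith
    have hv'close : ∀ k, k ≤ m → |v' k - ((v k : I) : ℝ)| ≤ 2*(m:ℝ)*δ' := by
      intro k hk
      have ha0 : (0:ℝ) ≤ ((v k : I):ℝ) := (v k).2.1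
      have ha1 : ((v k : I):ℝ) ≤ 1 := (v k).2.2
      have hkm : (k:ℝ) ≤ (m:ℝ) := by exact_mod_cast hk
      have heq : v' k - ((v k : I):ℝ)
          = ((k:ℝ)*δ' - ((v k : I):ℝ)*((m:ℝ)*δ'))/(1+(m:ℝ)*δ') := by
        rw [hv'def]
        field_simp
        ring
      rw [heq, abs_div, abs_of_pos denompos, div_le_iff₀ denompos]
      have hx1 : 0 ≤ (k:ℝ)*δ' := by positivity
      have hx2 : ((v k : I):ℝ)*((m:ℝ)*δ') ≤ (m:ℝ)*δ' :=
        mul_le_of_le_one_left (by positivity) ha1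
      have hx3 : 0 ≤ ((v k : I):ℝ)*((m:ℝ)*δ') := by positivity
      have hx4 : (k:ℝ)*δ' ≤ (m:ℝ)*δ' := mul_le_mul_of_nonneg_right hkm hδ'pos.le
      have hx5 : 0 ≤ ((m:ℝ)*δ')*((m:ℝ)*δ') := by positivity
      apply abs_le.2
      constructor
      · nlinarith [hx1, hx2, hx3, hx4, hx5]
      · nlinarith [hx1, hx2, hx3, hx4, hx5]
    obtain ⟨ρ, hρrep, hρstrict, hρseg⟩ := exists_pl_repar m hm1 v' hv'0 hv'm hv'strict
    have hregρ : IsRegularPath (fun t => (Reg qq).1 (ρ t)) :=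
      regular_comp (Reg qq).2.2 hρrep hρstrict
    set rq' : RegXY X x y := ⟨⟨fun t => (Reg qq).1 (ρ t),
      (Reg qq).1.continuous.comp hρrep.1⟩,
      ⟨⟨by simp [hρrep.2.2.1, (Reg qq).2.1.1], by simp [hρrep.2.2.2, (Reg qq).2.1.2]⟩,
        hregρ⟩⟩ with hrq'def
    have hrel : HomeoRel (Reg qq) rq' := ⟨ρ, hρrep, hρstrict, fun t => rfl⟩
    have hquot : Quot.mk (@HomeoRel X _ x y) (Reg qq) = Quot.mk _ rq' := Quot.sound hrel
    have hrq'mem : (rq'.1 : C(I,X)) ∈ ⋂₀ S := by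
      rw [Set.mem_sInter]
      intro s hs
      rw [hsEq s hs]
      intro z hz
      obtain ⟨k, hkm, hk1, hk2⟩ := exists_grid m hm1 z.2.1 z.2.2
      have hzIcc : z ∈ Set.Icc (e k) (e (k+1)) := by
        constructor
        · rw [← Subtype.coe_le_coe, hecoe k hkm.le]
          exact hk1
        · rw [← Subtype.coe_le_coe, hecoe (k+1) hkm]
          exact_mod_cast hk2
      have hkJ : k ∈ J s := ⟨hkm, ⟨z, hzIcc, hz⟩⟩
      have hseg := hρseg k hkm z hk1 hk2
      have hρz : ρ z ∈ Metric.thickening ε (Set.Icc (v k) (v (k+1))) := by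
        rw [Metric.mem_thickening_iff]
        have hclose1 := hv'close k hkm.le
        have hclose2 := hv'close (k+1) hkm
        rw [abs_le] at hclose1 hclose2
        rcases le_total ((ρ z : I):ℝ) ((v k : I):ℝ) with hle | hge
        · refine ⟨v k, Set.left_mem_Icc.2 (hvmono k hkm), ?_⟩
          rw [Subtype.dist_eq, Real.dist_eq, abs_of_nonpos (by linarith)]
          linarith [hseg.1]
        · rcases le_total ((ρ z : I):ℝ) ((v (k+1) : I):ℝ) with hle2 | hge2
          · refine ⟨ρ z, ⟨Subtype.coe_le_coe.1 hge, Subtype.coe_le_coe.1 hle2⟩, ?_⟩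
            rw [dist_self]
            exact hεpos
          · refine ⟨v (k+1), Set.right_mem_Icc.2 (hvmono k hkm), ?_⟩
            rw [Subtype.dist_eq, Real.dist_eq, abs_of_nonneg (by linarith)]
            linarith [hseg.2]
      exact hε s hs k hkJ hρz
    show Quot.mk (@HomeoRel X _ x y) (Reg qq) ∈ W
    rw [hquot]
    have hfinal : rq' ∈ (Quot.mk (@HomeoRel X _ x y)) ⁻¹' W := by
      rw [← hV₀eq]
      exact hBV hrq'mem
    exact hfinal
  · -- N open
    have hNeq : N = ⋂ s ∈ S, ((fun f : PathXY X x y => (f.1 : C(I,X))) ⁻¹'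
        {g : C(I,X) | Set.MapsTo ⇑g (Cs s) (Uf s)}) := by
      ext f
      simp only [hNdef, Set.mem_setOf_eq, Set.mem_iInter, Set.mem_preimage]
    rw [hNeq]
    apply hSfin.isOpen_biInter
    intro s hs
    exact (ContinuousMap.isOpen_setOf_mapsTo (hCcompact s) (hUo s hs)).preimage
      continuous_subtype_val
  · -- pp ∈ N
    intro s hs t' ht'
    rw [hfac pp t']
    exact hLA s hs ht'

end ContinuityD

end FR

/-- The map `T_R(X)(x,y) → T(X)(x,y)` induced by the inclusion
`R(X)(x,y) ↪ P(X)(x,y)` is a homeomorphism (quotients carry the quotient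
topology). -/
theorem traceSpace_homeomorph_regularTraceSpace
    {X : Type*} [TopologicalSpace X] [T2Space X] (x y : X) :
    ∃ h : Quot (@HomeoRel X _ x y) ≃ₜ Quot (@TraceRel X _ x y),
      ∀ p : RegXY X x y,
        h (Quot.mk _ p) = Quot.mk _ (⟨p.1, p.2.1⟩ : PathXY X x y) := by
  classical
  have spec : ∀ pp : PathXY X x y, ∃ r : RegXY X x y, ∃ φ : I → I,
      IsRepar φ ∧ ∀ t, pp.1 t = r.1 (φ t) := by
    intro pp
    obtain ⟨q, φ, hφ, hreg, hfac⟩ := FR.exists_reg pp.1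
    refine ⟨⟨q, ⟨⟨?_, ?_⟩, hreg⟩⟩, φ, hφ, hfac⟩
    · have h0 := hfac 0
      rw [hφ.2.2.1] at h0
      rw [← h0]
      exact pp.2.1
    · have h1 := hfac 1
      rw [hφ.2.2.2] at h1
      rw [← h1]
      exact pp.2.2
  choose Reg Φm hΦ hfac using spec
  have Fwd_wd : ∀ a b : RegXY X x y, HomeoRel a b →
      Quot.mk (@TraceRel X _ x y) ⟨a.1, a.2.1⟩ = Quot.mk _ ⟨b.1, b.2.1⟩ := by
    rintro a b ⟨ρ, hρ, -, hval⟩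
    apply Quot.sound
    exact ⟨ρ, id, hρ, FR.isRepar_id, funext fun t => (hval t).symm⟩
  have Bwd_wd : ∀ a b : PathXY X x y, TraceRel a b →
      Quot.mk (@HomeoRel X _ x y) (Reg a) = Quot.mk _ (Reg b) := by
    rintro a b ⟨φ, ψ, hφ', hψ', heq⟩
    have h1 : ∀ t, (Reg a).1 ((Φm a ∘ φ) t) = (Reg b).1 ((Φm b ∘ ψ) t) := by
      intro t
      have h2 := congrFun heq t
      simp only [Function.comp_apply] at h2 ⊢
      rw [← hfac a (φ t), ← hfac b (ψ t)]
      exact h2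
    obtain ⟨ρ, hρ, hρs, hval⟩ := FR.cancel (Reg a).2.2 (Reg b).2.2
      (FR.repar_comp (hΦ a) hφ') (FR.repar_comp (hΦ b) hψ') h1
    exact Quot.sound ⟨ρ, hρ, hρs, hval⟩
  refine ⟨⟨⟨Quot.lift (fun r : RegXY X x y =>
        Quot.mk (@TraceRel X _ x y) ⟨r.1, r.2.1⟩) Fwd_wd,
      Quot.lift (fun pp : PathXY X x y =>
        Quot.mk (@HomeoRel X _ x y) (Reg pp)) Bwd_wd, ?_, ?_⟩, ?_, ?_⟩, ?_⟩
  · apply Quot.ind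
    intro r
    show Quot.mk _ (Reg ⟨r.1, r.2.1⟩) = Quot.mk _ r
    apply Quot.sound
    obtain ⟨ρ, hρ, hρs, hval⟩ := FR.cancel (Reg ⟨r.1, r.2.1⟩).2.2 r.2.2
      (hΦ ⟨r.1, r.2.1⟩) FR.isRepar_id
      (fun t => (hfac ⟨r.1, r.2.1⟩ t).symm)
    exact ⟨ρ, hρ, hρs, hval⟩
  · apply Quot.ind
    intro pp
    show Quot.mk _ (⟨(Reg pp).1, (Reg pp).2.1⟩ : PathXY X x y) = Quot.mk _ pp
    apply Quot.sound
    exact ⟨Φm pp, id, hΦ pp, FR.isRepar_id, funext fun t => (hfac pp t).symm⟩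
  · exact continuous_quot_lift _
      (continuous_quot_mk.comp (Continuous.subtype_mk continuous_subtype_val _))
  · exact continuous_quot_lift _ (FR.continuous_regquot Reg Φm hΦ hfac)
  · intro p
    rfl
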